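/- arXiv:2206.12331 — 3 statements merged into one kernel-verified Lean document; each statement's English description precedes it below -/
import Mathlib

section
/- In the 1D discrete TGV formulation, a piecewise constant function u on a partition of an interval Ω satisfies FETGV²_{(α₀,α₁)}(u) = 0 if and only if u interpolates an affine function at the midpoints of the subintervals; i.e., there exist constants c, d such that the value of u on each subinterval I equals c·(midpoint of I) + d. -/
/-- 1D discrete TGV. `Ω = [x 0, x n]` is partitioned by vertices
`x 0 < x 1 < ⋯ < x n` into subintervals `Iᵢ = [x (i-1), x i]` (`i = 1, …, n`); `u i` is the
constant value of `u` on `Iᵢ`. The 1D discrete TGV (infimum over continuous piecewise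
affine `w`, represented by its vertex values, with `∫_{Iᵢ} |w'| = |w i − w (i−1)|` and
`h_{Vᵢ} = (x (i+1) − x (i−1))/2` the distance of adjacent midpoints) vanishes iff `u`
interpolates an affine function at the subinterval midpoints. -/
theorem stmt7
    (n : ℕ) (hn : 1 ≤ n) (x : ℕ → ℝ) (hx : ∀ i < n, x i < x (i + 1))
    (u : ℕ → ℝ) (α₀ α₁ : ℝ) (hα₀ : 0 < α₀) (hα₁ : 0 < α₁) :
    (⨅ w : ℕ → ℝ,
        α₁ * ∑ i ∈ Finset.Ico 1 n, |(u (i + 1) - u i) - ((x (i + 1) - x (i - 1)) / 2) * w i|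
        + α₀ * ∑ i ∈ Finset.Icc 1 n, |w i - w (i - 1)|) = 0 ↔
    ∃ c d : ℝ, ∀ i ∈ Finset.Icc 1 n, u i = c * ((x (i - 1) + x i) / 2) + d := by
  set F : (ℕ → ℝ) → ℝ := fun w =>
      α₁ * ∑ i ∈ Finset.Ico 1 n, |(u (i + 1) - u i) - ((x (i + 1) - x (i - 1)) / 2) * w i|
      + α₀ * ∑ i ∈ Finset.Icc 1 n, |w i - w (i - 1)| with hF
  have hFnn : ∀ w, 0 ≤ F w := by
    intro w
    have h1 : (0:ℝ) ≤ ∑ i ∈ Finset.Ico 1 n,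
        |(u (i + 1) - u i) - ((x (i + 1) - x (i - 1)) / 2) * w i| :=
      Finset.sum_nonneg fun _ _ => abs_nonneg _
    have h2 : (0:ℝ) ≤ ∑ i ∈ Finset.Icc 1 n, |w i - w (i - 1)| :=
      Finset.sum_nonneg fun _ _ => abs_nonneg _
    have := add_nonneg (mul_nonneg hα₁.le h1) (mul_nonneg hα₀.le h2)
    simpa [hF] using this
  have hbdd : BddBelow (Set.range F) := ⟨0, by rintro _ ⟨w, rfl⟩; exact hFnn w⟩
  -- H i is the distance between adjacent midpoints
  have hH : ∀ i, 1 ≤ i → i < n → 0 < (x (i + 1) - x (i - 1)) / 2 := by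
    intro i hi1 hin
    obtain ⟨p, rfl⟩ : ∃ p, i = p + 1 := ⟨i - 1, by omega⟩
    have h1 : x p < x (p + 1) := hx p (by omega)
    have h2 : x (p + 1) < x (p + 2) := hx (p + 1) (by omega)
    simp only [Nat.add_sub_cancel]
    linarith
  constructor
  · -- forward direction
    intro h0
    -- second-difference slopes agree
    have hδ : ∀ i, 2 ≤ i → i < n →
        (u (i + 1) - u i) / ((x (i + 1) - x (i - 1)) / 2)
          = (u i - u (i - 1)) / ((x i - x (i - 2)) / 2) := by
      intro i hi2 hin
      obtain ⟨p, rfl⟩ : ∃ p, i = p + 1 := ⟨i - 1, by omega⟩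
      have hp1 : 1 ≤ p := by omega
      simp only [Nat.add_sub_cancel, Nat.succ_sub_one]
      by_contra hne
      set H1 : ℝ := (x (p + 2) - x p) / 2 with hH1
      set H0 : ℝ := (x (p + 1) - x (p - 1)) / 2 with hH0
      have hH1pos : 0 < H1 := by
        have := hH (p + 1) (by omega) hin
        simp only [Nat.add_sub_cancel] at this
        exact this
      have hH0pos : 0 < H0 := hH p hp1 (by omega)
      set δ : ℝ := (u (p + 2) - u (p + 1)) / H1 - (u (p + 1) - u p) / H0 with hδdef
      have hδne : δ ≠ 0 := sub_ne_zero_of_ne hne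
      have hδpos : 0 < |δ| := abs_pos.mpr hδne
      set β : ℝ := min (min (α₁ * H1) (α₁ * H0)) α₀ with hβ
      have hβpos : 0 < β := by
        apply lt_min (lt_min _ _) hα₀ <;> positivity
      obtain ⟨w, hw⟩ : ∃ w, F w < β * |δ| := by
        apply exists_lt_of_ciInf_lt
        rw [h0]; positivity
      -- lower bound for F w
      set s1 : ℝ := |(u (p + 2) - u (p + 1)) / H1 - w (p + 1)| with hs1
      set s2 : ℝ := |w (p + 1) - w p| with hs2
      set s3 : ℝ := |(u (p + 1) - u p) / H0 - w p| with hs3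
      have hsum1 : ∑ i ∈ Finset.Ico 1 n,
          |(u (i + 1) - u i) - ((x (i + 1) - x (i - 1)) / 2) * w i|
          ≥ H1 * s1 + H0 * s3 := by
        have hsub : ({p, p + 1} : Finset ℕ) ⊆ Finset.Ico 1 n := by
          intro j hj
          simp only [Finset.mem_insert, Finset.mem_singleton] at hj
          simp only [Finset.mem_Ico]
          omega
        have hle := Finset.sum_le_sum_of_subset_of_nonneg hsub
          (f := fun i => |(u (i + 1) - u i) - ((x (i + 1) - x (i - 1)) / 2) * w i|)
          (fun _ _ _ => abs_nonneg _)
        rw [Finset.sum_pair (by omega : p ≠ p + 1)] at hle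
        have e1 : |(u (p + 1 + 1) - u (p + 1)) - ((x (p + 1 + 1) - x (p + 1 - 1)) / 2) * w (p + 1)|
            = H1 * s1 := by
          have : (u (p + 1 + 1) - u (p + 1)) - ((x (p + 1 + 1) - x (p + 1 - 1)) / 2) * w (p + 1)
              = H1 * ((u (p + 2) - u (p + 1)) / H1 - w (p + 1)) := by
            simp only [Nat.add_sub_cancel, show p + 1 + 1 = p + 2 from rfl]
            field_simp
            ring
          rw [this, abs_mul, abs_of_pos hH1pos]
        have e0 : |(u (p + 1) - u p) - ((x (p + 1) - x (p - 1)) / 2) * w p| = H0 * s3 := by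
          have : (u (p + 1) - u p) - ((x (p + 1) - x (p - 1)) / 2) * w p
              = H0 * ((u (p + 1) - u p) / H0 - w p) := by
            field_simp
            ring
          rw [this, abs_mul, abs_of_pos hH0pos]
        rw [e1, e0] at hle
        linarith
      have hsum2 : ∑ i ∈ Finset.Icc 1 n, |w i - w (i - 1)| ≥ s2 := by
        have hmem : p + 1 ∈ Finset.Icc 1 n := by simp; omega
        have := Finset.single_le_sum (f := fun i => |w i - w (i - 1)|)
          (fun _ _ => abs_nonneg _) hmem
        simpa [hs2] using this
      have hFlb : α₁ * (H1 * s1 + H0 * s3) + α₀ * s2 ≤ F w := by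
        have h1 := mul_le_mul_of_nonneg_left hsum1 hα₁.le
        have h2 := mul_le_mul_of_nonneg_left hsum2 hα₀.le
        simp only [hF]
        have := add_le_add h1 h2
        linarith [this]
      have htri : |δ| ≤ s1 + s2 + s3 := by
        have hd : δ = ((u (p + 2) - u (p + 1)) / H1 - w (p + 1))
            + (w (p + 1) - w p) + (w p - (u (p + 1) - u p) / H0) := by ring
        calc |δ| = |((u (p + 2) - u (p + 1)) / H1 - w (p + 1))
            + (w (p + 1) - w p) + (w p - (u (p + 1) - u p) / H0)| := by rw [← hd]
          _ ≤ |((u (p + 2) - u (p + 1)) / H1 - w (p + 1)) + (w (p + 1) - w p)|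
              + |w p - (u (p + 1) - u p) / H0| := abs_add_le _ _
          _ ≤ |(u (p + 2) - u (p + 1)) / H1 - w (p + 1)| + |w (p + 1) - w p|
              + |w p - (u (p + 1) - u p) / H0| := by
                have := abs_add_le ((u (p + 2) - u (p + 1)) / H1 - w (p + 1)) (w (p + 1) - w p)
                linarith
          _ = s1 + s2 + s3 := by rw [abs_sub_comm (w p)]
      have hs1nn : 0 ≤ s1 := abs_nonneg _
      have hs2nn : 0 ≤ s2 := abs_nonneg _
      have hs3nn : 0 ≤ s3 := abs_nonneg _
      have hb1 : β ≤ α₁ * H1 := le_trans (min_le_left _ _) (min_le_left _ _)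
      have hb2 : β ≤ α₁ * H0 := le_trans (min_le_left _ _) (min_le_right _ _)
      have hb3 : β ≤ α₀ := min_le_right _ _
      have : β * |δ| < β * |δ| := by
        calc β * |δ| ≤ β * (s1 + s2 + s3) := by
              exact mul_le_mul_of_nonneg_left htri hβpos.le
          _ = β * s1 + β * s2 + β * s3 := by ring
          _ ≤ (α₁ * H1) * s1 + α₀ * s2 + (α₁ * H0) * s3 := by
              have := mul_le_mul_of_nonneg_right hb1 hs1nn
              have := mul_le_mul_of_nonneg_right hb2 hs3nn
              have := mul_le_mul_of_nonneg_right hb3 hs2nn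
              linarith
          _ = α₁ * (H1 * s1 + H0 * s3) + α₀ * s2 := by ring
          _ ≤ F w := hFlb
          _ < β * |δ| := hw
      exact absurd this (lt_irrefl _)
    -- now build the affine function
    rcases eq_or_lt_of_le hn with hn1 | hn2
    · refine ⟨0, u 1, ?_⟩
      intro i hi
      rw [Finset.mem_Icc] at hi
      have : i = 1 := by omega
      simp [this]
    · -- n ≥ 2
      set c : ℝ := (u 2 - u 1) / ((x 2 - x 0) / 2) with hc
      refine ⟨c, u 1 - c * ((x 0 + x 1) / 2), ?_⟩
      have hslope : ∀ i, 1 ≤ i → i < n →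
          u (i + 1) - u i = c * ((x (i + 1) - x (i - 1)) / 2) := by
        intro i hi1
        induction i with
        | zero => omega
        | succ p ih =>
          intro hin
          rcases Nat.eq_or_lt_of_le hi1 with h1 | h1
          · -- p + 1 = 1
            have hp0 : p = 0 := by omega
            subst hp0
            have hpos := hH 1 le_rfl (by omega)
            simp only [show (1:ℕ)+1 = 2 by norm_num, show (1:ℕ)-1 = 0 by norm_num] at hpos
            simp only [show (0:ℕ)+1+1 = 2 by norm_num, show (0:ℕ)+1 = 1 by norm_num,
              show (0:ℕ)+1-1 = 0 by norm_num]
            rw [hc, div_mul_cancel₀ _ (ne_of_gt hpos)]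
          · -- p + 1 ≥ 2
            have hp1 : 1 ≤ p := by omega
            have hprev := ih hp1 (by omega)
            have hd := hδ (p + 1) (by omega) hin
            have he : p + 1 - 2 = p - 1 := by omega
            simp only [Nat.add_sub_cancel, Nat.succ_sub_one, he] at hd ⊢
            have hH1pos := hH (p + 1) (by omega) hin
            have hH0pos := hH p hp1 (by omega)
            simp only [Nat.add_sub_cancel] at hH1pos
            have h2 : (u (p + 1) - u p) / ((x (p + 1) - x (p - 1)) / 2) = c := by
              rw [hprev, mul_div_assoc, div_self (ne_of_gt hH0pos), mul_one]
            rw [h2] at hd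
            rw [← hd, div_mul_cancel₀ _ (ne_of_gt hH1pos)]
      intro i hi
      rw [Finset.mem_Icc] at hi
      obtain ⟨hi1, hin⟩ := hi
      clear hδ
      induction i with
      | zero => omega
      | succ p ih =>
        rcases Nat.eq_or_lt_of_le hi1 with h1 | h1
        · have hp0 : p = 0 := by omega
          subst hp0
          simp
        · have hp1 : 1 ≤ p := by omega
          have hprev := ih hp1 (by omega)
          have hs := hslope p hp1 (by omega)
          simp only [Nat.add_sub_cancel]
          rw [show u (p + 1) = u p + (u (p + 1) - u p) from by ring, hs, hprev]
          obtain ⟨q, rfl⟩ : ∃ q, p = q + 1 := ⟨p - 1, by omega⟩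
          simp only [Nat.add_sub_cancel]
          ring
  · -- backward direction
    rintro ⟨c, d, hu⟩
    have hzero : F (fun _ => c) = 0 := by
      simp only [hF]
      have h1 : ∑ i ∈ Finset.Ico 1 n,
          |(u (i + 1) - u i) - ((x (i + 1) - x (i - 1)) / 2) * (fun _ : ℕ => c) i| = 0 := by
        apply Finset.sum_eq_zero
        intro i hi
        rw [Finset.mem_Ico] at hi
        obtain ⟨hi1, hin⟩ := hi
        have hui : u i = c * ((x (i - 1) + x i) / 2) + d :=
          hu i (Finset.mem_Icc.mpr ⟨hi1, by omega⟩)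
        have hui1 : u (i + 1) = c * ((x (i + 1 - 1) + x (i + 1)) / 2) + d :=
          hu (i + 1) (Finset.mem_Icc.mpr ⟨by omega, by omega⟩)
        simp only [Nat.add_sub_cancel] at hui1
        rw [hui, hui1]
        simp only
        rw [abs_eq_zero]
        ring
      have h2 : ∑ i ∈ Finset.Icc 1 n,
          |(fun _ : ℕ => c) i - (fun _ : ℕ => c) (i - 1)| = 0 := by
        apply Finset.sum_eq_zero
        intro i _
        simp
      rw [h1, h2]
      ring
    apply le_antisymm
    · rw [← hzero]
      exact ciInf_le hbdd _
    · exact le_ciInf hFnn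
end

section
/- On a uniform 1D grid with n subintervals of length 1, the proposed discrete TGV formulation in terms of degrees of freedom, min over w ∈ ℝ^{n+1} of α₁ Σ_{i=1}^{n−1} |(u_{i+1} − u_i) − w_{i+1/2}| + α₀ Σ_{i=1}^{n} |w_{i+1/2} − w_{i−1/2}|, is always less than or equal to the finite-difference formulation min over w ∈ ℝⁿ of α₁ Σ_{i=1}^{n−1} |(u_{i+1} − u_i) − w_i| + α₁|w_n| + α₀|w_0| + α₀ Σ_{i=2}^{n−1} |w_i − w_{i−1}| + α₀|w_{n−1}|, for any u ∈ ℝⁿ and α₀, α₁ > 0. -/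
/-- On a uniform 1D grid with `n` unit subintervals, the proposed discrete TGV
(minimum over `n+1` degrees of freedom `w_{i+1/2}`, here `w i` for `i = 0, …, n`) is always
at most the finite-difference formulation of Bredies–Kunisch–Pock (minimum over `w₀, …,
w_{n-1}` with boundary terms from one-sided differences), for any `u` and `α₀, α₁ > 0`. -/
theorem stmt8
    (n : ℕ) (u : ℕ → ℝ) (α₀ α₁ : ℝ) (hα₀ : 0 < α₀) (hα₁ : 0 < α₁) :
    (⨅ w : ℕ → ℝ,
        α₁ * ∑ i ∈ Finset.Ico 1 n, |(u (i + 1) - u i) - w i|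
        + α₀ * ∑ i ∈ Finset.Icc 1 n, |w i - w (i - 1)|) ≤
    (⨅ w : ℕ → ℝ,
        α₁ * ∑ i ∈ Finset.Ico 1 n, |(u (i + 1) - u i) - w i|
        + α₁ * |w n| + α₀ * |w 0|
        + α₀ * ∑ i ∈ Finset.Ico 2 n, |w i - w (i - 1)|
        + α₀ * |w (n - 1)|) := by
  have hbdd : BddBelow (Set.range fun w : ℕ → ℝ =>
      α₁ * ∑ i ∈ Finset.Ico 1 n, |(u (i + 1) - u i) - w i|
      + α₀ * ∑ i ∈ Finset.Icc 1 n, |w i - w (i - 1)|) := by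
    refine ⟨0, ?_⟩
    rintro _ ⟨w, rfl⟩
    positivity
  apply le_ciInf
  intro w
  rcases le_or_gt n 1 with hn | hn
  · refine le_trans (ciInf_le hbdd (fun _ => 0)) ?_
    have h1 : Finset.Ico 1 n = ∅ := by
      apply Finset.Ico_eq_empty; omega
    simp only [h1, Finset.sum_empty, mul_zero, sub_zero, abs_zero, zero_add,
      Finset.sum_const_zero]
    positivity
  · obtain ⟨m, rfl⟩ : ∃ m, n = m + 2 := ⟨n - 2, by omega⟩
    set w' : ℕ → ℝ := fun i => if i = 0 then w 1 - w 0 else if i = m + 2 then 0 else w i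
      with hw'
    refine le_trans (ciInf_le hbdd w') ?_
    have hdata : ∑ i ∈ Finset.Ico 1 (m+2), |(u (i + 1) - u i) - w' i|
        = ∑ i ∈ Finset.Ico 1 (m+2), |(u (i + 1) - u i) - w i| := by
      apply Finset.sum_congr rfl
      intro i hi
      simp only [Finset.mem_Ico] at hi
      simp only [hw']
      rw [if_neg (by omega : ¬ i = 0), if_neg (by omega : ¬ i = m + 2)]
    have hreg : ∑ i ∈ Finset.Icc 1 (m+2), |w' i - w' (i - 1)|
        = |w 0| + ∑ i ∈ Finset.Ico 2 (m+2), |w i - w (i-1)| + |w (m+1)| := by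
      have e1 : Finset.Icc 1 (m+2) = Finset.Ico 1 (m+3) := by
        exact (Finset.Ico_add_one_right_eq_Icc 1 (m + 2)).symm
      rw [e1, Finset.sum_Ico_succ_top (by omega : 1 ≤ m + 2),
        Finset.sum_eq_sum_Ico_succ_bot (by omega : 1 < m + 2)]
      have h1 : |w' 1 - w' 0| = |w 0| := by
        simp only [hw']
        rw [if_neg (by omega : ¬ (1:ℕ) = 0), if_neg (by omega : ¬ (1:ℕ) = m + 2),
          if_pos trivial]
        rw [(by ring : w 1 - (w 1 - w 0) = w 0)]
      have h2 : |w' (m+2) - w' (m+2-1)| = |w (m+1)| := by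
        simp only [hw', (by omega : m + 2 - 1 = m + 1)]
        rw [if_neg (by omega : ¬ m + 2 = 0), if_pos trivial,
          if_neg (by omega : ¬ m + 1 = 0), if_neg (by omega : ¬ m + 1 = m + 2)]
        rw [zero_sub, abs_neg]
      have h3 : ∑ i ∈ Finset.Ico 2 (m+2), |w' i - w' (i-1)|
          = ∑ i ∈ Finset.Ico 2 (m+2), |w i - w (i-1)| := by
        apply Finset.sum_congr rfl
        intro i hi
        simp only [Finset.mem_Ico] at hi
        have hi1 : ¬ i = 0 := by omega
        have hi2 : ¬ i = m + 2 := by omega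
        have hi3 : ¬ i - 1 = 0 := by omega
        have hi4 : ¬ i - 1 = m + 2 := by omega
        simp only [hw']
        rw [if_neg hi1, if_neg hi2, if_neg hi3, if_neg hi4]
      rw [h1, h2, h3]
    rw [hdata, hreg]
    have hnn : 0 ≤ α₁ * |w (m + 2)| := by positivity
    have hm1 : m + 2 - 1 = m + 1 := by omega
    rw [hm1]
    nlinarith [hnn]
end

section
/- On a connected conforming triangular mesh with distinct circumcenters across each interior edge, the kernel of the discrete functional FETGV²_{(α₀,α₁)} (defined for piecewise constant u by minimizing over Raviart–Thomas fields w) is exactly the 3-dimensional space of piecewise constant functions that interpolate affine functions at the triangle circumcenters: u is in the kernel iff there exists an affine f: ℝ² → ℝ with u|_T = f(m_T) for every triangle T. -/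
open Filter Topology

set_option maxHeartbeats 1000000

private lemma key_tendsto {C : ℝ} (hC : 0 < C) {x : ℕ → ℝ} (hx0 : ∀ n, 0 ≤ x n)
    (hx : ∀ n : ℕ, C * x n ≤ 1 / (n + 1)) : Tendsto x atTop (𝓝 0) := by
  have h1 : Tendsto (fun n : ℕ => C * x n) atTop (𝓝 0) :=
    squeeze_zero (fun n => mul_nonneg hC.le (hx0 n)) hx
      tendsto_one_div_add_atTop_nhds_zero_nat
  have h2 := h1.const_mul C⁻¹
  simpa [← mul_assoc, inv_mul_cancel₀ hC.ne'] using h2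

/-- On a connected conforming triangular mesh (triangles `ι` with circumcenters
`m T` and areas `A T > 0`; interior edges `κ` given as segments from `P e` to `Q e` with unit
normal `ν e` and adjacent triangles `plus e`, `minus e`; `h e = |m₊ − m₋|₂ > 0` with
`−h e • ν e = m₊ − m₋`), the kernel of the discrete functional `FETGV²_{(α₀,α₁)}` — the
infimum over Raviart–Thomas fields `w|_T(x) = a T + b T • x` with continuous normal
components of `α₁ Σ_E ‖[u] + h_E ⟨w, μ₊⟩‖_{L¹(E)} + α₀ Σ_T ∫_T |∇w|_F + α₀ Σ_E ∫_E I_E(|[w]|₂)`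
(the normal trace being constant along each edge, and `|∇w|_F = |b T| √2`) — consists exactly
of the piecewise constant functions interpolating an affine function at the circumcenters. -/
theorem stmt14
    {ι κ : Type} [Fintype ι] [Fintype κ]
    (plus minus : κ → ι)
    (m : ι → EuclideanSpace ℝ (Fin 2)) (A : ι → ℝ) (hA : ∀ T, 0 < A T)
    (P Q : κ → EuclideanSpace ℝ (Fin 2)) (hPQ : ∀ e, P e ≠ Q e)
    (ν : κ → EuclideanSpace ℝ (Fin 2)) (hν : ∀ e, ‖ν e‖ = 1)
    (hνperp : ∀ e, (inner ℝ (ν e) (Q e - P e) : ℝ) = 0)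
    (h : κ → ℝ) (hh : ∀ e, h e = ‖m (plus e) - m (minus e)‖)
    (hhν : ∀ e, - (h e) • ν e = m (plus e) - m (minus e))
    (hdistinct : ∀ e, m (plus e) ≠ m (minus e))
    (hconn : ∀ i j : ι, Relation.ReflTransGen
        (fun s t => ∃ e, (plus e = s ∧ minus e = t) ∨ (plus e = t ∧ minus e = s)) i j)
    (α₀ α₁ : ℝ) (hα₀ : 0 < α₀) (hα₁ : 0 < α₁)
    (u : ι → ℝ) :
    (⨅ p : {p : (ι → EuclideanSpace ℝ (Fin 2)) × (ι → ℝ) //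
        ∀ e : κ, ∀ x ∈ segment ℝ (P e) (Q e),
          (inner ℝ ((p.1 (plus e) + p.2 (plus e) • x) -
                  (p.1 (minus e) + p.2 (minus e) • x)) (ν e) : ℝ) = 0},
      α₁ * ∑ e : κ, dist (P e) (Q e) *
          |(u (plus e) - u (minus e)) +
            h e * (inner ℝ (p.1.1 (plus e) + p.1.2 (plus e) • P e) (ν e) : ℝ)|
      + α₀ * ∑ T : ι, A T * (|p.1.2 T| * Real.sqrt 2)
      + α₀ * ∑ e : κ, (dist (P e) (Q e) / 2) *
          (‖(p.1.1 (plus e) + p.1.2 (plus e) • P e) -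
              (p.1.1 (minus e) + p.1.2 (minus e) • P e)‖ +
           ‖(p.1.1 (plus e) + p.1.2 (plus e) • Q e) -
              (p.1.1 (minus e) + p.1.2 (minus e) • Q e)‖)) = 0 ↔
    (∃ (g : EuclideanSpace ℝ (Fin 2)) (c : ℝ),
      ∀ T : ι, u T = (inner ℝ g (m T) : ℝ) + c) := by
  classical
  -- nonnegativity facts about the three groups of sums
  have hsum1 : ∀ (aa : ι → EuclideanSpace ℝ (Fin 2)) (bb : ι → ℝ),
      0 ≤ ∑ e : κ, dist (P e) (Q e) *
        |(u (plus e) - u (minus e)) +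
          h e * (inner ℝ (aa (plus e) + bb (plus e) • P e) (ν e) : ℝ)| :=
    fun aa bb => Finset.sum_nonneg fun e _ => mul_nonneg dist_nonneg (abs_nonneg _)
  have hsum2 : ∀ bb : ι → ℝ, 0 ≤ ∑ T : ι, A T * (|bb T| * Real.sqrt 2) :=
    fun bb => Finset.sum_nonneg fun T _ =>
      mul_nonneg (hA T).le (mul_nonneg (abs_nonneg _) (Real.sqrt_nonneg _))
  have hsum3 : ∀ (aa : ι → EuclideanSpace ℝ (Fin 2)) (bb : ι → ℝ),
      0 ≤ ∑ e : κ, (dist (P e) (Q e) / 2) *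
        (‖(aa (plus e) + bb (plus e) • P e) - (aa (minus e) + bb (minus e) • P e)‖ +
         ‖(aa (plus e) + bb (plus e) • Q e) - (aa (minus e) + bb (minus e) • Q e)‖) :=
    fun aa bb => Finset.sum_nonneg fun e _ => mul_nonneg (by positivity)
      (add_nonneg (norm_nonneg _) (norm_nonneg _))
  have hnonneg : ∀ p : {p : (ι → EuclideanSpace ℝ (Fin 2)) × (ι → ℝ) //
        ∀ e : κ, ∀ x ∈ segment ℝ (P e) (Q e),
          (inner ℝ ((p.1 (plus e) + p.2 (plus e) • x) -
                  (p.1 (minus e) + p.2 (minus e) • x)) (ν e) : ℝ) = 0},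
      (0:ℝ) ≤
      α₁ * ∑ e : κ, dist (P e) (Q e) *
          |(u (plus e) - u (minus e)) +
            h e * (inner ℝ (p.1.1 (plus e) + p.1.2 (plus e) • P e) (ν e) : ℝ)|
      + α₀ * ∑ T : ι, A T * (|p.1.2 T| * Real.sqrt 2)
      + α₀ * ∑ e : κ, (dist (P e) (Q e) / 2) *
          (‖(p.1.1 (plus e) + p.1.2 (plus e) • P e) -
              (p.1.1 (minus e) + p.1.2 (minus e) • P e)‖ +
           ‖(p.1.1 (plus e) + p.1.2 (plus e) • Q e) -
              (p.1.1 (minus e) + p.1.2 (minus e) • Q e)‖) := by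
    intro p
    have h1 := hsum1 p.1.1 p.1.2
    have h2 := hsum2 p.1.2
    have h3 := hsum3 p.1.1 p.1.2
    have := mul_nonneg hα₁.le h1
    have := mul_nonneg hα₀.le h2
    have := mul_nonneg hα₀.le h3
    linarith
  haveI hne : Nonempty {p : (ι → EuclideanSpace ℝ (Fin 2)) × (ι → ℝ) //
        ∀ e : κ, ∀ x ∈ segment ℝ (P e) (Q e),
          (inner ℝ ((p.1 (plus e) + p.2 (plus e) • x) -
                  (p.1 (minus e) + p.2 (minus e) • x)) (ν e) : ℝ) = 0} :=
    ⟨⟨((fun _ : ι => (0 : EuclideanSpace ℝ (Fin 2))), (fun _ : ι => (0:ℝ))),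
      by intro e x hx; simp⟩⟩
  constructor
  · -- forward direction
    intro h0
    rcases isEmpty_or_nonempty ι with hι | hι
    · exact ⟨0, 0, fun T => (hι.false T).elim⟩
    obtain ⟨T₀⟩ := hι
    -- minimizing sequence
    have hseq : ∀ n : ℕ, ∃ p : {p : (ι → EuclideanSpace ℝ (Fin 2)) × (ι → ℝ) //
        ∀ e : κ, ∀ x ∈ segment ℝ (P e) (Q e),
          (inner ℝ ((p.1 (plus e) + p.2 (plus e) • x) -
                  (p.1 (minus e) + p.2 (minus e) • x)) (ν e) : ℝ) = 0},
        α₁ * ∑ e : κ, dist (P e) (Q e) *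
            |(u (plus e) - u (minus e)) +
              h e * (inner ℝ (p.1.1 (plus e) + p.1.2 (plus e) • P e) (ν e) : ℝ)|
        + α₀ * ∑ T : ι, A T * (|p.1.2 T| * Real.sqrt 2)
        + α₀ * ∑ e : κ, (dist (P e) (Q e) / 2) *
            (‖(p.1.1 (plus e) + p.1.2 (plus e) • P e) -
                (p.1.1 (minus e) + p.1.2 (minus e) • P e)‖ +
             ‖(p.1.1 (plus e) + p.1.2 (plus e) • Q e) -
                (p.1.1 (minus e) + p.1.2 (minus e) • Q e)‖) < 1 / (n + 1) := by
      intro n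
      have hpos : (0:ℝ) < 1 / (n + 1) := by positivity
      rw [← h0] at hpos
      exact exists_lt_of_ciInf_lt hpos
    choose pp hp using hseq
    -- componentwise limits
    have hXabs : ∀ e : κ, Tendsto (fun n =>
        |(u (plus e) - u (minus e)) +
          h e * (inner ℝ ((pp n).1.1 (plus e) + (pp n).1.2 (plus e) • P e) (ν e) : ℝ)|)
        atTop (𝓝 0) := by
      intro e
      refine key_tendsto (C := α₁ * dist (P e) (Q e))
        (mul_pos hα₁ (dist_pos.mpr (hPQ e))) (fun n => abs_nonneg _) (fun n => ?_)
      have t1 : dist (P e) (Q e) *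
          |(u (plus e) - u (minus e)) +
            h e * (inner ℝ ((pp n).1.1 (plus e) + (pp n).1.2 (plus e) • P e) (ν e) : ℝ)| ≤
          ∑ e' : κ, dist (P e') (Q e') *
            |(u (plus e') - u (minus e')) +
              h e' * (inner ℝ ((pp n).1.1 (plus e') + (pp n).1.2 (plus e') • P e') (ν e') : ℝ)| :=
        Finset.single_le_sum (f := fun e' => dist (P e') (Q e') *
            |(u (plus e') - u (minus e')) +
              h e' * (inner ℝ ((pp n).1.1 (plus e') + (pp n).1.2 (plus e') • P e') (ν e') : ℝ)|)
          (fun i _ => mul_nonneg dist_nonneg (abs_nonneg _)) (Finset.mem_univ e)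
      have t1' := mul_le_mul_of_nonneg_left t1 hα₁.le
      have t2 := mul_nonneg hα₀.le (hsum2 (pp n).1.2)
      have t3 := mul_nonneg hα₀.le (hsum3 (pp n).1.1 (pp n).1.2)
      have t4 := (hp n).le
      rw [mul_assoc]
      linarith
    have hX : ∀ e : κ, Tendsto (fun n =>
        (u (plus e) - u (minus e)) +
          h e * (inner ℝ ((pp n).1.1 (plus e) + (pp n).1.2 (plus e) • P e) (ν e) : ℝ))
        atTop (𝓝 0) := fun e =>
      squeeze_zero_norm (fun n => le_of_eq (Real.norm_eq_abs _)) (hXabs e)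
    have hb : ∀ T : ι, Tendsto (fun n => (pp n).1.2 T) atTop (𝓝 0) := by
      intro T
      have habs : Tendsto (fun n => |(pp n).1.2 T|) atTop (𝓝 0) := by
        refine key_tendsto (C := α₀ * (A T * Real.sqrt 2))
          (mul_pos hα₀ (mul_pos (hA T) (by positivity))) (fun n => abs_nonneg _)
          (fun n => ?_)
        have t1 : A T * (|(pp n).1.2 T| * Real.sqrt 2) ≤
            ∑ T' : ι, A T' * (|(pp n).1.2 T'| * Real.sqrt 2) :=
          Finset.single_le_sum (fun i _ => mul_nonneg (hA i).le
            (mul_nonneg (abs_nonneg _) (Real.sqrt_nonneg _))) (Finset.mem_univ T)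
        have t1' := mul_le_mul_of_nonneg_left t1 hα₀.le
        have t2 := mul_nonneg hα₁.le (hsum1 (pp n).1.1 (pp n).1.2)
        have t3 := mul_nonneg hα₀.le (hsum3 (pp n).1.1 (pp n).1.2)
        have t4 := (hp n).le
        have teq : α₀ * (A T * Real.sqrt 2) * |(pp n).1.2 T| =
            α₀ * (A T * (|(pp n).1.2 T| * Real.sqrt 2)) := by ring
        rw [teq]
        linarith
      exact squeeze_zero_norm (fun n => le_of_eq (Real.norm_eq_abs _)) habs
    have hjP : ∀ e : κ, Tendsto (fun n =>
        ((pp n).1.1 (plus e) + (pp n).1.2 (plus e) • P e) -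
        ((pp n).1.1 (minus e) + (pp n).1.2 (minus e) • P e)) atTop (𝓝 0) := by
      intro e
      have hnorm : Tendsto (fun n =>
          ‖((pp n).1.1 (plus e) + (pp n).1.2 (plus e) • P e) -
            ((pp n).1.1 (minus e) + (pp n).1.2 (minus e) • P e)‖) atTop (𝓝 0) := by
        have hsumt : Tendsto (fun n =>
            ‖((pp n).1.1 (plus e) + (pp n).1.2 (plus e) • P e) -
              ((pp n).1.1 (minus e) + (pp n).1.2 (minus e) • P e)‖ +
            ‖((pp n).1.1 (plus e) + (pp n).1.2 (plus e) • Q e) -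
              ((pp n).1.1 (minus e) + (pp n).1.2 (minus e) • Q e)‖) atTop (𝓝 0) := by
          refine key_tendsto (C := α₀ * (dist (P e) (Q e) / 2))
            (mul_pos hα₀ (by have := dist_pos.mpr (hPQ e); linarith))
            (fun n => add_nonneg (norm_nonneg _) (norm_nonneg _)) (fun n => ?_)
          have t1 : (dist (P e) (Q e) / 2) *
              (‖((pp n).1.1 (plus e) + (pp n).1.2 (plus e) • P e) -
                  ((pp n).1.1 (minus e) + (pp n).1.2 (minus e) • P e)‖ +
               ‖((pp n).1.1 (plus e) + (pp n).1.2 (plus e) • Q e) -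
                  ((pp n).1.1 (minus e) + (pp n).1.2 (minus e) • Q e)‖) ≤
              ∑ e' : κ, (dist (P e') (Q e') / 2) *
                (‖((pp n).1.1 (plus e') + (pp n).1.2 (plus e') • P e') -
                    ((pp n).1.1 (minus e') + (pp n).1.2 (minus e') • P e')‖ +
                 ‖((pp n).1.1 (plus e') + (pp n).1.2 (plus e') • Q e') -
                    ((pp n).1.1 (minus e') + (pp n).1.2 (minus e') • Q e')‖) :=
            Finset.single_le_sum (f := fun e' => (dist (P e') (Q e') / 2) *
                (‖((pp n).1.1 (plus e') + (pp n).1.2 (plus e') • P e') -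
                    ((pp n).1.1 (minus e') + (pp n).1.2 (minus e') • P e')‖ +
                 ‖((pp n).1.1 (plus e') + (pp n).1.2 (plus e') • Q e') -
                    ((pp n).1.1 (minus e') + (pp n).1.2 (minus e') • Q e')‖))
              (fun i _ => mul_nonneg (by positivity)
                (add_nonneg (norm_nonneg _) (norm_nonneg _))) (Finset.mem_univ e)
          have t1' := mul_le_mul_of_nonneg_left t1 hα₀.le
          have t2 := mul_nonneg hα₁.le (hsum1 (pp n).1.1 (pp n).1.2)
          have t3 := mul_nonneg hα₀.le (hsum2 (pp n).1.2)
          have t4 := (hp n).le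
          rw [mul_assoc]
          linarith
        refine squeeze_zero (fun n => norm_nonneg _)
          (fun n => le_add_of_nonneg_right (norm_nonneg _)) hsumt
      exact squeeze_zero_norm (fun n => le_rfl) hnorm
    -- difference of the constant parts across one edge tends to 0
    have hadj : ∀ e : κ, Tendsto (fun n =>
        (pp n).1.1 (plus e) - (pp n).1.1 (minus e)) atTop (𝓝 0) := by
      intro e
      have h1 := (hjP e).sub
        (((hb (plus e)).smul_const (P e)).sub ((hb (minus e)).smul_const (P e)))
      have h2 : Tendsto (fun n =>
          (((pp n).1.1 (plus e) + (pp n).1.2 (plus e) • P e) -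
            ((pp n).1.1 (minus e) + (pp n).1.2 (minus e) • P e)) -
          ((pp n).1.2 (plus e) • P e - (pp n).1.2 (minus e) • P e)) atTop (𝓝 0) := by
        simpa using h1
      exact h2.congr fun n => by abel
    -- propagate along the dual graph
    have haRT : ∀ i j : ι, Relation.ReflTransGen
        (fun s t => ∃ e, (plus e = s ∧ minus e = t) ∨ (plus e = t ∧ minus e = s)) i j →
        Tendsto (fun n => (pp n).1.1 i - (pp n).1.1 j) atTop (𝓝 0) := by
      have hstep1 : ∀ s t : ι,
          (∃ e, (plus e = s ∧ minus e = t) ∨ (plus e = t ∧ minus e = s)) →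
          Tendsto (fun n => (pp n).1.1 s - (pp n).1.1 t) atTop (𝓝 0) := by
        rintro s t ⟨e, ⟨h1, h2⟩ | ⟨h1, h2⟩⟩
        · subst h1; subst h2; exact hadj e
        · subst h1; subst h2
          have := (hadj e).neg
          refine (by simpa using this : Tendsto _ atTop (𝓝 (0 : EuclideanSpace ℝ (Fin 2)))).congr
            fun n => by abel
      intro i j hij
      induction hij with
      | refl => simpa using (tendsto_const_nhds :
          Tendsto (fun _ : ℕ => (0 : EuclideanSpace ℝ (Fin 2))) atTop _)
      | tail _ hstep ih =>
        have h2 := hstep1 _ _ hstep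
        have h3 := ih.add h2
        refine (by simpa using h3 : Tendsto _ atTop (𝓝 (0 : EuclideanSpace ℝ (Fin 2)))).congr
          fun n => by abel
    -- the inner ℝ products against a single drifting constant
    have hinner : ∀ e : κ, Tendsto (fun n =>
        (inner ℝ (((pp n).1.1 (plus e) + (pp n).1.2 (plus e) • P e) - (pp n).1.1 T₀)
          (ν e) : ℝ)) atTop (𝓝 0) := by
      intro e
      have hdiff : Tendsto (fun n =>
          ((pp n).1.1 (plus e) + (pp n).1.2 (plus e) • P e) - (pp n).1.1 T₀)
          atTop (𝓝 0) := by
        have h1 := (haRT (plus e) T₀ (hconn (plus e) T₀)).add ((hb (plus e)).smul_const (P e))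
        have h2 : Tendsto (fun n =>
            ((pp n).1.1 (plus e) - (pp n).1.1 T₀) + (pp n).1.2 (plus e) • P e)
            atTop (𝓝 0) := by simpa using h1
        exact h2.congr fun n => by abel
      have := hdiff.inner (𝕜 := ℝ) (tendsto_const_nhds (x := ν e))
      simpa using this
    have hc : ∀ e : κ, Tendsto (fun n =>
        (u (plus e) - u (minus e)) + h e * (inner ℝ ((pp n).1.1 T₀) (ν e) : ℝ))
        atTop (𝓝 0) := by
      intro e
      have h1 := (hX e).sub ((hinner e).const_mul (h e))
      have h2 : Tendsto (fun n =>
          ((u (plus e) - u (minus e)) +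
            h e * (inner ℝ ((pp n).1.1 (plus e) + (pp n).1.2 (plus e) • P e) (ν e) : ℝ)) -
          h e * (inner ℝ (((pp n).1.1 (plus e) + (pp n).1.2 (plus e) • P e) - (pp n).1.1 T₀)
            (ν e) : ℝ)) atTop (𝓝 0) := by simpa using h1
      refine h2.congr fun n => ?_
      rw [inner_sub_left]
      ring
    -- the limit lies in the range of a linear map
    let L : EuclideanSpace ℝ (Fin 2) →ₗ[ℝ] (κ → ℝ) :=
      { toFun := fun v e => (inner ℝ v (m (plus e) - m (minus e)) : ℝ)
        map_add' := fun x y => funext fun e => inner_add_left x y (m (plus e) - m (minus e))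
        map_smul' := fun r x => funext fun e => real_inner_smul_left x (m (plus e) - m (minus e)) r }
    have hLtends : Tendsto (fun n => L ((pp n).1.1 T₀)) atTop
        (𝓝 (fun e => u (plus e) - u (minus e))) := by
      rw [tendsto_pi_nhds]
      intro e
      have h1 := hc e
      have h2 := (h1.neg).add_const (u (plus e) - u (minus e))
      have h3 : Tendsto (fun n =>
          -((u (plus e) - u (minus e)) + h e * (inner ℝ ((pp n).1.1 T₀) (ν e) : ℝ)) +
            (u (plus e) - u (minus e))) atTop (𝓝 (u (plus e) - u (minus e))) := by
        simpa using h2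
      refine h3.congr fun n => ?_
      show _ = (inner ℝ ((pp n).1.1 T₀) (m (plus e) - m (minus e)) : ℝ)
      rw [← hhν e, real_inner_smul_right]
      ring
    have hdmem : (fun e => u (plus e) - u (minus e)) ∈ LinearMap.range L := by
      have hclosed : IsClosed ((LinearMap.range L : Submodule ℝ (κ → ℝ)) : Set (κ → ℝ)) :=
        Submodule.closed_of_finiteDimensional _
      exact hclosed.mem_of_tendsto hLtends
        (Filter.Eventually.of_forall fun n => ⟨(pp n).1.1 T₀, rfl⟩)
    obtain ⟨g, hg⟩ := hdmem
    have hedge : ∀ e : κ, u (plus e) - u (minus e) =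
        (inner ℝ g (m (plus e)) : ℝ) - (inner ℝ g (m (minus e)) : ℝ) := by
      intro e
      have h1 : (inner ℝ g (m (plus e) - m (minus e)) : ℝ) = u (plus e) - u (minus e) :=
        congrFun hg e
      rw [inner_sub_right] at h1
      exact h1.symm
    have hpsi : ∀ i j : ι, Relation.ReflTransGen
        (fun s t => ∃ e, (plus e = s ∧ minus e = t) ∨ (plus e = t ∧ minus e = s)) i j →
        u i - (inner ℝ g (m i) : ℝ) = u j - (inner ℝ g (m j) : ℝ) := by
      intro i j hij
      induction hij with
      | refl => rfl
      | tail _ hstep ih =>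
        rcases hstep with ⟨e, ⟨h1, h2⟩ | ⟨h1, h2⟩⟩
        · subst h1; subst h2
          have := hedge e
          linarith
        · subst h1; subst h2
          have := hedge e
          linarith
    refine ⟨g, u T₀ - (inner ℝ g (m T₀) : ℝ), fun T => ?_⟩
    have := hpsi T T₀ (hconn T T₀)
    linarith
  · -- backward direction
    rintro ⟨g, c, hgc⟩
    refine le_antisymm ?_ (le_ciInf hnonneg)
    refine le_trans (ciInf_le ⟨0, ?_⟩
      ⟨((fun _ : ι => g), (fun _ : ι => (0:ℝ))), by intro e x hx; simp⟩) ?_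
    · rintro y ⟨p, rfl⟩
      exact hnonneg p
    · have hterm : ∀ e : κ,
          (u (plus e) - u (minus e)) + h e * (inner ℝ g (ν e) : ℝ) = 0 := by
        intro e
        have h3 : (inner ℝ g (m (plus e) - m (minus e)) : ℝ) =
            -(h e) * (inner ℝ g (ν e) : ℝ) := by
          rw [← hhν e, real_inner_smul_right]
        rw [inner_sub_right] at h3
        rw [hgc, hgc]
        linarith
      simp only [zero_smul, add_zero, hterm, abs_zero, mul_zero, zero_mul,
        Finset.sum_const_zero, sub_self, norm_zero, zero_add, le_refl]
end
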